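/- For any random variables X and Y taking values in [0,1], and any function f : [0,1] → ℝ of bounded variation with total variation V(f), one has |E f(X) − E f(Y)| ≤ V(f) · sup_{0 ≤ t ≤ 1} |P(X ≤ t) − P(Y ≤ t)|. -/

import Mathlib

open MeasureTheory

open Set in
private lemma aux_abs_sub_le_var {f : ℝ → ℝ} {s : Set ℝ} (hf : BoundedVariationOn f s)
    {a b : ℝ} (ha : a ∈ s) (hb : b ∈ s) (hab : a ≤ b) :
    |f b - f a| ≤ variationOnFromTo f s a b := by
  rw [variationOnFromTo.eq_of_le f s hab]
  have h1 : edist (f b) (f a) ≤ eVariationOn f (s ∩ Icc a b) :=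
    eVariationOn.edist_le f ⟨hb, hab, le_refl b⟩ ⟨ha, le_refl a, hab⟩
  have h2 : eVariationOn f (s ∩ Icc a b) ≠ ⊤ := hf.mono inter_subset_left
  have h3 : |f b - f a| = (edist (f b) (f a)).toReal := by
    rw [← Real.dist_eq, dist_edist]
  rw [h3]
  exact ENNReal.toReal_mono h2 h1

open Set Filter Topology in
private lemma aux_key {Ω : Type*} [MeasurableSpace Ω] (ℙ : Measure Ω) [IsProbabilityMeasure ℙ]
    (X Y : Ω → ℝ) (hX : Measurable X) (hY : Measurable Y)
    (hXrange : ∀ ω, X ω ∈ Set.Icc (0:ℝ) 1) (hYrange : ∀ ω, Y ω ∈ Set.Icc (0:ℝ) 1)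
    (g : ℝ → ℝ) (hg : Monotone g) (K : ℝ)
    (hK : ∀ t ∈ Set.Icc (0:ℝ) 1,
      |(ℙ {ω | X ω ≤ t}).toReal - (ℙ {ω | Y ω ≤ t}).toReal| ≤ K) (u : ℝ) :
    |(ℙ {ω | u ≤ g (X ω)}).toReal - (ℙ {ω | u ≤ g (Y ω)}).toReal| ≤ K := by
  have hK0 : 0 ≤ K := le_trans (abs_nonneg _) (hK 0 ⟨le_refl 0, zero_le_one⟩)
  by_cases h0 : u ≤ g 0
  · have hXu : {ω | u ≤ g (X ω)} = Set.univ :=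
      eq_univ_of_forall fun ω => h0.trans (hg (hXrange ω).1)
    have hYu : {ω | u ≤ g (Y ω)} = Set.univ :=
      eq_univ_of_forall fun ω => h0.trans (hg (hYrange ω).1)
    simp [hXu, hYu, hK0]
  push_neg at h0
  by_cases hne : ∃ x ∈ Set.Icc (0:ℝ) 1, u ≤ g x
  swap
  · push_neg at hne
    have hXu : {ω | u ≤ g (X ω)} = (∅ : Set Ω) := by
      ext ω; simp only [mem_setOf_eq, mem_empty_iff_false, iff_false, not_le]
      exact hne _ (hXrange ω)
    have hYu : {ω | u ≤ g (Y ω)} = (∅ : Set Ω) := by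
      ext ω; simp only [mem_setOf_eq, mem_empty_iff_false, iff_false, not_le]
      exact hne _ (hYrange ω)
    simp [hXu, hYu, hK0]
  obtain ⟨x₁, hx₁, hux₁⟩ := hne
  set S : Set ℝ := {x | u ≤ g x} with hS
  have hSne : S.Nonempty := ⟨x₁, hux₁⟩
  have hSpos : ∀ y ∈ S, (0:ℝ) ≤ y := by
    intro y hy
    by_contra hy0
    push_neg at hy0
    exact absurd (hy.trans (hg hy0.le)) (not_le.mpr h0)
  have hSbdd : BddBelow S := ⟨0, fun y hy => hSpos y hy⟩
  set s₀ := sInf S with hs₀def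
  have hs₀0 : 0 ≤ s₀ := le_csInf hSne fun y hy => hSpos y hy
  have hs₀1 : s₀ ≤ 1 := (csInf_le hSbdd hux₁).trans hx₁.2
  have hupper : ∀ y ∈ S, ∀ z, y ≤ z → z ∈ S := fun y hy z hyz => hy.trans (hg hyz)
  by_cases hs : u ≤ g s₀
  · -- S = Ici s₀
    have hSeq : S = Ici s₀ := by
      ext y
      constructor
      · exact fun hy => csInf_le hSbdd hy
      · exact fun hy => hupper s₀ hs y hy
    have hs₀pos : 0 < s₀ := by
      rcases lt_or_eq_of_le hs₀0 with h | h
      · exact h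
      · exfalso; rw [← h] at hs; exact absurd hs (not_le.mpr h0)
    have hXev : {ω | u ≤ g (X ω)} = {ω | X ω < s₀}ᶜ := by
      ext ω
      have : X ω ∈ S ↔ s₀ ≤ X ω := by rw [hSeq]; rfl
      simpa [not_lt, hS] using this
    have hYev : {ω | u ≤ g (Y ω)} = {ω | Y ω < s₀}ᶜ := by
      ext ω
      have : Y ω ∈ S ↔ s₀ ≤ Y ω := by rw [hSeq]; rfl
      simpa [not_lt, hS] using this
    have hmX : MeasurableSet {ω | X ω < s₀} := hX measurableSet_Iio
    have hmY : MeasurableSet {ω | Y ω < s₀} := hY measurableSet_Iio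
    have htoX : (ℙ {ω | X ω < s₀}ᶜ).toReal = 1 - (ℙ {ω | X ω < s₀}).toReal := by
      rw [prob_compl_eq_one_sub hmX,
        ENNReal.toReal_sub_of_le prob_le_one ENNReal.one_ne_top, ENNReal.toReal_one]
    have htoY : (ℙ {ω | Y ω < s₀}ᶜ).toReal = 1 - (ℙ {ω | Y ω < s₀}).toReal := by
      rw [prob_compl_eq_one_sub hmY,
        ENNReal.toReal_sub_of_le prob_le_one ENNReal.one_ne_top, ENNReal.toReal_one]
    rw [hXev, hYev, htoX, htoY]
    -- limit argument
    set sq : ℕ → ℝ := fun n => s₀ - s₀ / (n + 1) with hsq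
    have hsq_lt : ∀ n, sq n < s₀ := by
      intro n
      have : 0 < s₀ / (n + 1) := div_pos hs₀pos (by positivity)
      simp only [hsq]; linarith
    have hsq_mem : ∀ n, sq n ∈ Set.Icc (0:ℝ) 1 := by
      intro n
      constructor
      · have h1 : s₀ / (n + 1) ≤ s₀ / 1 := by
          apply div_le_div_of_nonneg_left hs₀pos.le one_pos
          have : (0:ℝ) ≤ (n:ℝ) := Nat.cast_nonneg n
          linarith
        simp only [hsq]
        rw [div_one] at h1
        linarith
      · exact ((hsq_lt n).le).trans hs₀1
    have hsq_mono : Monotone sq := by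
      intro n m hnm
      have : s₀ / (m + 1) ≤ s₀ / (n + 1) := by
        apply div_le_div_of_nonneg_left hs₀pos.le (by positivity)
        have : (n:ℝ) ≤ (m:ℝ) := Nat.cast_le.mpr hnm
        linarith
      simp only [hsq]; linarith
    have hUnion : ∀ (Z : Ω → ℝ), (⋃ n, {ω | Z ω ≤ sq n}) = {ω | Z ω < s₀} := by
      intro Z
      ext ω
      simp only [mem_iUnion, mem_setOf_eq]
      constructor
      · rintro ⟨n, hn⟩; exact lt_of_le_of_lt hn (hsq_lt n)
      · intro hω
        set d := s₀ - Z ω with hd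
        have hdpos : 0 < d := by simp only [hd]; linarith
        obtain ⟨n, hn⟩ := exists_nat_ge (s₀ / d)
        refine ⟨n, ?_⟩
        have hdiv : s₀ / (n + 1) ≤ d := by
          have h2 : s₀ / d ≤ (n:ℝ) + 1 := by linarith
          have h3 : 0 < s₀ / d := div_pos hs₀pos hdpos
          have h4 : s₀ / ((n:ℝ) + 1) ≤ s₀ / (s₀ / d) :=
            div_le_div_of_nonneg_left hs₀pos.le h3 h2
          have h5 : s₀ / (s₀ / d) = d := by
            field_simp
          linarith
        simp only [hsq]
        linarith
    have hlimZ : ∀ (Z : Ω → ℝ), Measurable Z →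
        Tendsto (fun n => (ℙ {ω | Z ω ≤ sq n}).toReal) atTop
          (𝓝 ((ℙ {ω | Z ω < s₀}).toReal)) := by
      intro Z hZ
      have hmono : Monotone (fun n => {ω | Z ω ≤ sq n}) :=
        fun n m hnm ω hω => le_trans hω (hsq_mono hnm)
      have h1 : Tendsto (fun n => ℙ {ω | Z ω ≤ sq n}) atTop
          (𝓝 (ℙ (⋃ n, {ω | Z ω ≤ sq n}))) := tendsto_measure_iUnion_atTop hmono
      rw [hUnion Z] at h1
      exact (ENNReal.tendsto_toReal (measure_ne_top ℙ _)).comp h1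
    have hlim : Tendsto (fun n =>
        |(ℙ {ω | X ω ≤ sq n}).toReal - (ℙ {ω | Y ω ≤ sq n}).toReal|) atTop
        (𝓝 |(ℙ {ω | X ω < s₀}).toReal - (ℙ {ω | Y ω < s₀}).toReal|) :=
      ((hlimZ X hX).sub (hlimZ Y hY)).abs
    have habs : |(ℙ {ω | X ω < s₀}).toReal - (ℙ {ω | Y ω < s₀}).toReal| ≤ K :=
      le_of_tendsto hlim (Eventually.of_forall fun n => hK _ (hsq_mem n))
    calc |(1 - (ℙ {ω | X ω < s₀}).toReal) - (1 - (ℙ {ω | Y ω < s₀}).toReal)|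
        = |(ℙ {ω | X ω < s₀}).toReal - (ℙ {ω | Y ω < s₀}).toReal| := by
          rw [← abs_neg]; ring_nf
      _ ≤ K := habs
  · -- S = Ioi s₀
    have hSeq : S = Ioi s₀ := by
      ext y
      constructor
      · intro hy
        rcases lt_or_eq_of_le (csInf_le hSbdd hy) with h | h
        · exact h
        · exfalso; rw [← h] at hy; exact absurd hy hs
      · intro hy
        obtain ⟨z, hz, hzy⟩ := exists_lt_of_csInf_lt hSne hy
        exact hupper z hz y hzy.le
    have hXev : {ω | u ≤ g (X ω)} = {ω | X ω ≤ s₀}ᶜ := by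
      ext ω
      have : X ω ∈ S ↔ s₀ < X ω := by rw [hSeq]; rfl
      simpa [not_le, hS] using this
    have hYev : {ω | u ≤ g (Y ω)} = {ω | Y ω ≤ s₀}ᶜ := by
      ext ω
      have : Y ω ∈ S ↔ s₀ < Y ω := by rw [hSeq]; rfl
      simpa [not_le, hS] using this
    have hmX : MeasurableSet {ω | X ω ≤ s₀} := hX measurableSet_Iic
    have hmY : MeasurableSet {ω | Y ω ≤ s₀} := hY measurableSet_Iic
    rw [hXev, hYev, prob_compl_eq_one_sub hmX, prob_compl_eq_one_sub hmY,
      ENNReal.toReal_sub_of_le prob_le_one ENNReal.one_ne_top,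
      ENNReal.toReal_sub_of_le prob_le_one ENNReal.one_ne_top, ENNReal.toReal_one]
    have := hK s₀ ⟨hs₀0, hs₀1⟩
    calc |(1 - (ℙ {ω | X ω ≤ s₀}).toReal) - (1 - (ℙ {ω | Y ω ≤ s₀}).toReal)|
        = |(ℙ {ω | X ω ≤ s₀}).toReal - (ℙ {ω | Y ω ≤ s₀}).toReal| := by
          rw [← abs_neg]; ring_nf
      _ ≤ K := this

open Set Filter Topology in
private lemma aux_mono_bound {Ω : Type*} [MeasurableSpace Ω] (ℙ : Measure Ω)
    [IsProbabilityMeasure ℙ]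
    (X Y : Ω → ℝ) (hX : Measurable X) (hY : Measurable Y)
    (hXrange : ∀ ω, X ω ∈ Set.Icc (0:ℝ) 1) (hYrange : ∀ ω, Y ω ∈ Set.Icc (0:ℝ) 1)
    (g : ℝ → ℝ) (hg : Monotone g) (K : ℝ)
    (hK : ∀ t ∈ Set.Icc (0:ℝ) 1,
      |(ℙ {ω | X ω ≤ t}).toReal - (ℙ {ω | Y ω ≤ t}).toReal| ≤ K) :
    |(∫ ω, g (X ω) ∂ℙ) - ∫ ω, g (Y ω) ∂ℙ| ≤ (g 1 - g 0) * K := by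
  have hK0 : 0 ≤ K := le_trans (abs_nonneg _) (hK 0 ⟨le_refl 0, zero_le_one⟩)
  set M : ℝ := g 1 - g 0 with hMdef
  have hM0 : 0 ≤ M := by
    have := hg (zero_le_one (α := ℝ)); simp only [hMdef]; linarith
  have hgm : Measurable g := hg.measurable
  -- integrability
  have hint : ∀ (Z : Ω → ℝ), Measurable Z → (∀ ω, Z ω ∈ Set.Icc (0:ℝ) 1) →
      Integrable (fun ω => g (Z ω) - g 0) ℙ := by
    intro Z hZ hZr
    apply Integrable.mono' (integrable_const M)
      ((hgm.comp hZ).sub measurable_const).aestronglyMeasurable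
    apply Eventually.of_forall
    intro ω
    have h1 : g 0 ≤ g (Z ω) := hg (hZr ω).1
    have h2 : g (Z ω) ≤ g 1 := hg (hZr ω).2
    simp only [Pi.sub_apply, Function.comp_apply]
    rw [Real.norm_eq_abs, abs_of_nonneg (by linarith)]
    simp only [hMdef]; linarith
  have hintX := hint X hX hXrange
  have hintY := hint Y hY hYrange
  -- layer cake
  have hlc : ∀ (Z : Ω → ℝ), Measurable Z → (∀ ω, Z ω ∈ Set.Icc (0:ℝ) 1) →
      ∫ ω, (g (Z ω) - g 0) ∂ℙ
        = ∫ t in Ioc 0 M, (ℙ {ω | g 0 + t ≤ g (Z ω)}).toReal := by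
    intro Z hZ hZr
    have nn : (0 : Ω → ℝ) ≤ᵐ[ℙ] fun ω => g (Z ω) - g 0 :=
      Eventually.of_forall fun ω => by
        have := hg (hZr ω).1
        simp only [Pi.zero_apply]
        linarith
    have bd : (fun ω => g (Z ω) - g 0) ≤ᵐ[ℙ] fun _ => M :=
      Eventually.of_forall fun ω => by
        have := hg (hZr ω).2
        simp only [hMdef]
        linarith
    have h1 := Integrable.integral_eq_integral_Ioc_meas_le (M := M) (hint Z hZ hZr) nn bd
    rw [h1]
    apply setIntegral_congr_fun measurableSet_Ioc
    intro t _
    have hset : {ω | t ≤ g (Z ω) - g 0} = {ω | g 0 + t ≤ g (Z ω)} := by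
      ext ω
      simp only [mem_setOf_eq]
      constructor
      · intro h; linarith
      · intro h; linarith
    show (ℙ {a | t ≤ g (Z a) - g 0}).toReal = (ℙ {ω | g 0 + t ≤ g (Z ω)}).toReal
    rw [hset]
  -- split off g 0
  have hsplit : ∀ (Z : Ω → ℝ), Measurable Z → (∀ ω, Z ω ∈ Set.Icc (0:ℝ) 1) →
      ∫ ω, (g (Z ω) - g 0) ∂ℙ = (∫ ω, g (Z ω) ∂ℙ) - g 0 := by
    intro Z hZ hZr
    have hZint : Integrable (fun ω => g (Z ω)) ℙ := by
      have := (hint Z hZ hZr).add (integrable_const (g 0))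
      apply this.congr
      apply Eventually.of_forall
      intro ω; simp
    rw [integral_sub hZint (integrable_const _), integral_const]
    simp [measure_univ]
  -- integrable on Ioc
  have hAint : ∀ (Z : Ω → ℝ), Measurable Z →
      IntegrableOn (fun t => (ℙ {ω | g 0 + t ≤ g (Z ω)}).toReal) (Ioc 0 M) := by
    intro Z hZ
    have hanti : Antitone (fun t => ℙ {ω | g 0 + t ≤ g (Z ω)}) := by
      intro s t hst
      apply measure_mono
      intro ω hω
      simp only [mem_setOf_eq] at *
      linarith
    apply Integrable.mono' (integrableOn_const (C := (1:ℝ)) measure_Ioc_lt_top.ne)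
      (Measurable.ennreal_toReal hanti.measurable).aestronglyMeasurable
    apply Eventually.of_forall
    intro t
    rw [Real.norm_eq_abs, abs_of_nonneg ENNReal.toReal_nonneg]
    exact ENNReal.toReal_le_of_le_ofReal zero_le_one (by simpa using prob_le_one)
  -- put together
  have hdiff : (∫ ω, g (X ω) ∂ℙ) - ∫ ω, g (Y ω) ∂ℙ
      = ∫ t in Ioc 0 M, ((ℙ {ω | g 0 + t ≤ g (X ω)}).toReal
          - (ℙ {ω | g 0 + t ≤ g (Y ω)}).toReal) := by
    rw [integral_sub (hAint X hX) (hAint Y hY), ← hlc X hX hXrange, ← hlc Y hY hYrange,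
      hsplit X hX hXrange, hsplit Y hY hYrange]
    ring
  rw [hdiff]
  have hbound : ‖∫ t in Ioc 0 M, ((ℙ {ω | g 0 + t ≤ g (X ω)}).toReal
      - (ℙ {ω | g 0 + t ≤ g (Y ω)}).toReal)‖ ≤ ∫ _t in Ioc 0 M, K := by
    apply norm_integral_le_of_norm_le (integrableOn_const (C := K) measure_Ioc_lt_top.ne)
    apply Eventually.of_forall
    intro t
    rw [Real.norm_eq_abs]
    exact aux_key ℙ X Y hX hY hXrange hYrange g hg K hK (g 0 + t)
  rw [Real.norm_eq_abs] at hbound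
  have hconst : ∫ _t in Ioc 0 M, K = M * K := by
    rw [setIntegral_const, measureReal_def, Real.volume_Ioc, smul_eq_mul]
    rw [ENNReal.toReal_ofReal (by linarith)]
    ring
  rw [hconst] at hbound
  exact hbound

/-- For `[0,1]`-valued random variables `X`, `Y` and a function
`f` of bounded variation on `[0,1]` with total variation `V(f)`,
`|E f(X) − E f(Y)| ≤ V(f) · sup_{0 ≤ t ≤ 1} |P(X ≤ t) − P(Y ≤ t)|`. -/
theorem stmt0
    {Ω : Type*} [MeasurableSpace Ω] (ℙ : Measure Ω) [IsProbabilityMeasure ℙ]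
    (X Y : Ω → ℝ) (hX : Measurable X) (hY : Measurable Y)
    (hXrange : ∀ ω, X ω ∈ Set.Icc (0:ℝ) 1) (hYrange : ∀ ω, Y ω ∈ Set.Icc (0:ℝ) 1)
    (f : ℝ → ℝ) (hfBV : BoundedVariationOn f (Set.Icc 0 1))
    (hfX : Integrable (fun ω => f (X ω)) ℙ) (hfY : Integrable (fun ω => f (Y ω)) ℙ) :
    |(∫ ω, f (X ω) ∂ℙ) - ∫ ω, f (Y ω) ∂ℙ| ≤
      (eVariationOn f (Set.Icc 0 1)).toReal *
        ⨆ t : Set.Icc (0:ℝ) 1,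
          |(ℙ {ω | X ω ≤ (t : ℝ)}).toReal - (ℙ {ω | Y ω ≤ (t : ℝ)}).toReal| := by
  classical
  set s : Set ℝ := Set.Icc 0 1 with hsdef
  -- the sup K
  set K : ℝ := ⨆ t : Set.Icc (0:ℝ) 1,
      |(ℙ {ω | X ω ≤ (t : ℝ)}).toReal - (ℙ {ω | Y ω ≤ (t : ℝ)}).toReal| with hKdef
  have hbdd : BddAbove (Set.range fun t : Set.Icc (0:ℝ) 1 =>
      |(ℙ {ω | X ω ≤ (t : ℝ)}).toReal - (ℙ {ω | Y ω ≤ (t : ℝ)}).toReal|) := by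
    refine ⟨1, ?_⟩
    rintro x ⟨t, rfl⟩
    have h1 : (ℙ {ω | X ω ≤ (t : ℝ)}).toReal ≤ 1 :=
      ENNReal.toReal_le_of_le_ofReal zero_le_one (by simpa using prob_le_one)
    have h2 : (ℙ {ω | Y ω ≤ (t : ℝ)}).toReal ≤ 1 :=
      ENNReal.toReal_le_of_le_ofReal zero_le_one (by simpa using prob_le_one)
    have h3 : (0:ℝ) ≤ (ℙ {ω | X ω ≤ (t : ℝ)}).toReal := ENNReal.toReal_nonneg
    have h4 : (0:ℝ) ≤ (ℙ {ω | Y ω ≤ (t : ℝ)}).toReal := ENNReal.toReal_nonneg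
    rw [abs_le]
    constructor <;> linarith
  have hK : ∀ t ∈ Set.Icc (0:ℝ) 1,
      |(ℙ {ω | X ω ≤ t}).toReal - (ℙ {ω | Y ω ≤ t}).toReal| ≤ K :=
    fun t ht => le_ciSup hbdd (⟨t, ht⟩ : Set.Icc (0:ℝ) 1)
  -- clamp
  set c : ℝ → ℝ := fun x => max 0 (min x 1) with hcdef
  have hcmono : Monotone c := fun x y hxy =>
    max_le_max (le_refl 0) (min_le_min hxy (le_refl 1))
  have hcmem : ∀ x, c x ∈ s := by
    intro x
    constructor
    · exact le_max_left 0 _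
    · simp only [hcdef]
      exact max_le (zero_le_one) (min_le_right x 1)
  have hcid : ∀ x ∈ s, c x = x := by
    rintro x ⟨h0, h1⟩
    simp only [hcdef]
    rw [min_eq_left h1, max_eq_right h0]
  have h0s : (0:ℝ) ∈ s := ⟨le_refl 0, zero_le_one⟩
  have h1s : (1:ℝ) ∈ s := ⟨zero_le_one, le_refl 1⟩
  -- Jordan decomposition
  set v : ℝ → ℝ := fun x => variationOnFromTo f s 0 x with hvdef
  set p : ℝ → ℝ := fun x => (v (c x) + f (c x)) / 2 with hpdef
  set q : ℝ → ℝ := fun x => (v (c x) - f (c x)) / 2 with hqdef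
  have hvar : ∀ a ∈ s, ∀ b ∈ s, a ≤ b → v b - v a = variationOnFromTo f s a b := by
    intro a ha b hb hab
    have := variationOnFromTo.add hfBV.locallyBoundedVariationOn h0s ha hb
    simp only [hvdef]
    linarith
  have hpmono : Monotone p := by
    intro x y hxy
    have hab : c x ≤ c y := hcmono hxy
    have h1 : |f (c y) - f (c x)| ≤ variationOnFromTo f s (c x) (c y) :=
      aux_abs_sub_le_var hfBV (hcmem x) (hcmem y) hab
    have h2 := hvar (c x) (hcmem x) (c y) (hcmem y) hab
    have h3 : f (c x) - f (c y) ≤ |f (c y) - f (c x)| := by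
      rw [abs_sub_comm]; exact le_abs_self _
    simp only [hpdef]
    linarith
  have hqmono : Monotone q := by
    intro x y hxy
    have hab : c x ≤ c y := hcmono hxy
    have h1 : |f (c y) - f (c x)| ≤ variationOnFromTo f s (c x) (c y) :=
      aux_abs_sub_le_var hfBV (hcmem x) (hcmem y) hab
    have h2 := hvar (c x) (hcmem x) (c y) (hcmem y) hab
    have h3 : f (c y) - f (c x) ≤ |f (c y) - f (c x)| := le_abs_self _
    simp only [hqdef]
    linarith
  -- p - q = f on s
  have hpq : ∀ x ∈ s, p x - q x = f x := by
    intro x hx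
    simp only [hpdef, hqdef, hcid x hx]
    ring
  -- integrability of p ∘ X etc.
  have hpint : ∀ (Z : Ω → ℝ), Measurable Z → (∀ ω, Z ω ∈ Set.Icc (0:ℝ) 1) →
      ∀ (r : ℝ → ℝ), Monotone r → Integrable (fun ω => r (Z ω)) ℙ := by
    intro Z hZ hZr r hr
    apply Integrable.mono' (integrable_const (max ‖r 0‖ ‖r 1‖))
      (hr.measurable.comp hZ).aestronglyMeasurable
    apply Filter.Eventually.of_forall
    intro ω
    rw [Real.norm_eq_abs]
    exact abs_le_max_abs_abs (hr (hZr ω).1) (hr (hZr ω).2)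
  -- split integrals
  have hsplitZ : ∀ (Z : Ω → ℝ), Measurable Z → (∀ ω, Z ω ∈ Set.Icc (0:ℝ) 1) →
      ∫ ω, f (Z ω) ∂ℙ = (∫ ω, p (Z ω) ∂ℙ) - ∫ ω, q (Z ω) ∂ℙ := by
    intro Z hZ hZr
    rw [← integral_sub (hpint Z hZ hZr p hpmono) (hpint Z hZ hZr q hqmono)]
    apply integral_congr_ae
    apply Filter.Eventually.of_forall
    intro ω
    exact (hpq (Z ω) (hZr ω)).symm
  have hXeq := hsplitZ X hX hXrange
  have hYeq := hsplitZ Y hY hYrange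
  have hp_bound := aux_mono_bound ℙ X Y hX hY hXrange hYrange p hpmono K hK
  have hq_bound := aux_mono_bound ℙ X Y hX hY hXrange hYrange q hqmono K hK
  -- total variation identities
  have hc0 : c 0 = 0 := hcid 0 h0s
  have hc1 : c 1 = 1 := hcid 1 h1s
  have hv0 : v 0 = 0 := variationOnFromTo.self f s 0
  have hv1 : v 1 = (eVariationOn f s).toReal := by
    simp only [hvdef]
    rw [variationOnFromTo.eq_of_le f s zero_le_one]
    congr 1
    rw [hsdef, Set.inter_self]
  have hsum : (p 1 - p 0) + (q 1 - q 0) = (eVariationOn f s).toReal := by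
    simp only [hpdef, hqdef, hc0, hc1, hv0]
    rw [← hv1]
    ring
  calc |(∫ ω, f (X ω) ∂ℙ) - ∫ ω, f (Y ω) ∂ℙ|
      = |((∫ ω, p (X ω) ∂ℙ) - ∫ ω, p (Y ω) ∂ℙ)
          - ((∫ ω, q (X ω) ∂ℙ) - ∫ ω, q (Y ω) ∂ℙ)| := by
        rw [hXeq, hYeq]; congr 1; ring
    _ ≤ |(∫ ω, p (X ω) ∂ℙ) - ∫ ω, p (Y ω) ∂ℙ|
          + |(∫ ω, q (X ω) ∂ℙ) - ∫ ω, q (Y ω) ∂ℙ| := abs_sub _ _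
    _ ≤ (p 1 - p 0) * K + (q 1 - q 0) * K := add_le_add hp_bound hq_bound
    _ = (eVariationOn f s).toReal * K := by rw [← hsum]; ring
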